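/- Let (X, d) be a compact metric space and G : X → X a continuous map. For n ≥ 1 and ε > 0 let r(G, n, ε) denote the minimal cardinality of a set F ⊆ X such that X = ⋃_{z ∈ F} {y ∈ X : d(G^i z, G^i y) < ε for all 0 ≤ i < n}. Let Σ ⊆ X be nonempty, let m ≥ 1, and let a₁ < b₁ ≤ a₂ < b₂ ≤ ⋯ ≤ a_m < b_m be natural numbers; set E := ⋃_{j=1}^m {a_j + 1, …, b_j}. Then there exists a finite set F ⊆ Σ with cardinality at most ∏_{j=1}^m r(G, b_j − a_j, ε/2) such that Σ ⊆ ⋃_{x ∈ F} {y ∈ Σ : d(G^i x, G^i y) ≤ ε for all i ∈ E}. -/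

import Mathlib

open Set

/-- `spanningCard G n ε` is the minimal cardinality of an `(n, ε)`-spanning set for `G`:
a set `F` such that every point of the space lies in some `(n, ε, G)`-Bowen ball centered
in `F`. -/
noncomputable def spanningCard {X : Type*} [MetricSpace X] (G : X → X) (n : ℕ) (ε : ℝ) : ℕ :=
  sInf {k | ∃ F : Finset X, F.card = k ∧
    ∀ y : X, ∃ z ∈ F, ∀ i < n, dist (G^[i] z) (G^[i] y) < ε}

lemma exists_spanning {X : Type*} [MetricSpace X] [CompactSpace X]
    (G : X → X) (hG : Continuous G) (n : ℕ) (ε : ℝ) (hε : 0 < ε) :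
    ∃ F : Finset X, F.card = spanningCard G n ε ∧
      ∀ y : X, ∃ z ∈ F, ∀ i < n, dist (G^[i] z) (G^[i] y) < ε := by
  have hne : {k | ∃ F : Finset X, F.card = k ∧
      ∀ y : X, ∃ z ∈ F, ∀ i < n, dist (G^[i] z) (G^[i] y) < ε}.Nonempty := by
    obtain ⟨t, ht⟩ := isCompact_univ.elim_finite_subcover
      (fun z : X => {y | ∀ i < n, dist (G^[i] z) (G^[i] y) < ε})
      (fun z => by
        have : {y | ∀ i < n, dist (G^[i] z) (G^[i] y) < ε}
            = ⋂ i ∈ Finset.range n, {y | dist (G^[i] z) (G^[i] y) < ε} := by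
          ext y; simp [Finset.mem_range]
        show IsOpen {y | ∀ i < n, dist (G^[i] z) (G^[i] y) < ε}
        rw [this]
        exact isOpen_biInter_finset fun i _ =>
          isOpen_lt (continuous_const.dist (hG.iterate i)) continuous_const)
      (fun y _ => mem_iUnion.2 ⟨y, fun i _ => by simpa using hε⟩)
    refine ⟨t.card, t, rfl, fun y => ?_⟩
    have := ht (mem_univ y)
    simpa using this
  have h := Nat.sInf_mem hne
  obtain ⟨F, hF1, hF2⟩ := h
  exact ⟨F, hF1, hF2⟩

/-- (Covering a set by red Bowen balls.) Given time blocks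
`(a₁, b₁], …, (a_m, b_m]` with `a₁ < b₁ ≤ a₂ < b₂ ≤ ⋯ ≤ a_m < b_m`, any nonempty `Σ ⊆ X`
can be covered by at most `∏_j r(G, b_j − a_j, ε/2)` red Bowen balls
`{y ∈ Σ : d(G^i x, G^i y) ≤ ε for all i ∈ ⋃_j (a_j, b_j]}` with centers `x ∈ Σ`. -/
theorem stmt_11 {X : Type*} [MetricSpace X] [CompactSpace X]
    (G : X → X) (hG : Continuous G) (ε : ℝ) (hε : 0 < ε)
    (S : Set X) (hS : S.Nonempty) (m : ℕ) (hm : 1 ≤ m)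
    (a b : ℕ → ℕ) (hab : ∀ j < m, a j < b j)
    (hchain : ∀ j, j + 1 < m → b j ≤ a (j + 1)) :
    ∃ F : Finset X, ↑F ⊆ S ∧
      F.card ≤ ∏ j ∈ Finset.range m, spanningCard G (b j - a j) (ε / 2) ∧
      S ⊆ ⋃ x ∈ F,
        {y ∈ S | ∀ i : ℕ, (∃ j < m, a j < i ∧ i ≤ b j) → dist (G^[i] x) (G^[i] y) ≤ ε} := by
  classical
  have hε2 : 0 < ε / 2 := by linarith
  choose F hFcard hFspan using fun j : Fin m =>
    exists_spanning G hG (b j - a j) (ε / 2) hε2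
  have hspan : ∀ (y : X) (j : Fin m), ∃ z ∈ F j, ∀ i < b (j : ℕ) - a (j : ℕ),
      dist (G^[i] z) (G^[i] (G^[a (j : ℕ) + 1] y)) < ε / 2 :=
    fun y j => hFspan j (G^[a (j : ℕ) + 1] y)
  choose c hcF hcd using hspan
  set K : Finset (Fin m → X) :=
    (Fintype.piFinset F).filter (fun d => ∃ y ∈ S, c y = d) with hK
  have hrep : ∀ d ∈ K, ∃ x, x ∈ S ∧ c x = d := by
    intro d hd
    have := (Finset.mem_filter.1 hd).2
    obtain ⟨y, hy, hcy⟩ := this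
    exact ⟨y, hy, hcy⟩
  choose rep hrepS hrepc using hrep
  set g : (Fin m → X) → X := fun d => if h : d ∈ K then rep d h else hS.choose with hg
  refine ⟨K.image g, ?_, ?_, ?_⟩
  · intro x hx
    rw [Finset.mem_coe, Finset.mem_image] at hx
    obtain ⟨d, hd, rfl⟩ := hx
    simp only [hg, dif_pos hd]
    exact hrepS d hd
  · calc (K.image g).card
        ≤ K.card := Finset.card_image_le
      _ ≤ (Fintype.piFinset F).card := Finset.card_filter_le _ _
      _ = ∏ j : Fin m, (F j).card := Fintype.card_piFinset F
      _ = ∏ j : Fin m, spanningCard G (b (j : ℕ) - a (j : ℕ)) (ε / 2) := by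
          exact Finset.prod_congr rfl fun j _ => hFcard j
      _ = ∏ j ∈ Finset.range m, spanningCard G (b j - a j) (ε / 2) :=
          Fin.prod_univ_eq_prod_range (fun j => spanningCard G (b j - a j) (ε / 2)) m
  · intro y hy
    have hdK : c y ∈ K := by
      refine Finset.mem_filter.2 ⟨Fintype.mem_piFinset.2 fun j => hcF y j, ⟨y, hy, rfl⟩⟩
    set x := rep (c y) hdK with hx
    have hxc : c x = c y := hrepc (c y) hdK
    refine mem_iUnion₂.2 ⟨x, ?_, hy, ?_⟩
    · refine Finset.mem_image.2 ⟨c y, hdK, ?_⟩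
      simp only [hg, dif_pos hdK]
      exact hx.symm
    · intro i hi
      obtain ⟨j, hj, h1, h2⟩ := hi
      set j' : Fin m := ⟨j, hj⟩ with hj'
      have habj : a j < b j := hab j hj
      set i' := i - (a j + 1) with hi'
      have hieq : i' + (a j + 1) = i := by omega
      have hilt : i' < b j - a j := by omega
      have hiter : ∀ w : X, G^[i] w = G^[i'] (G^[a j + 1] w) := by
        intro w
        rw [← hieq, Function.iterate_add_apply]
      have hdx : dist (G^[i'] (c y j')) (G^[i] x) < ε / 2 := by
        rw [hiter x]
        have := hcd x j' i' hilt
        rw [hxc] at this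
        exact this
      have hdy : dist (G^[i'] (c y j')) (G^[i] y) < ε / 2 := by
        rw [hiter y]
        exact hcd y j' i' hilt
      calc dist (G^[i] x) (G^[i] y)
          ≤ dist (G^[i'] (c y j')) (G^[i] x) + dist (G^[i'] (c y j')) (G^[i] y) :=
            dist_triangle_left _ _ _
        _ ≤ ε / 2 + ε / 2 := by linarith
        _ = ε := by ring
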